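/- Let n ≥ 1 and let d̄₁,…,d̄ₙ and d₁,…,dₙ be real numbers in [u, 1] for some u > 0 (so all are bounded below by u and above by 1). Then the second-order remainder of the product linearization satisfies |∏ᵢ d̄ᵢ − ∏ᵢ dᵢ − ∑ₗ (∏_{i≠l} d̄ᵢ)(d̄ₗ − dₗ)| ≤ (2ⁿ / u^(n−1)) · ∑ᵢ |d̄ᵢ − dᵢ|². -/

import Mathlib

open Finset

lemma abs_prod_sub_prod_le_aux {ι : Type*} (s : Finset ι) (a b : ι → ℝ)
    (ha : ∀ i ∈ s, |a i| ≤ 1) (hb : ∀ i ∈ s, |b i| ≤ 1) :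
    |∏ i ∈ s, a i - ∏ i ∈ s, b i| ≤ ∑ i ∈ s, |a i - b i| := by
  induction s using Finset.cons_induction with
  | empty => simp
  | cons j s hj ih =>
    rw [prod_cons, prod_cons, sum_cons]
    have hkey : a j * ∏ i ∈ s, a i - b j * ∏ i ∈ s, b i
        = (a j - b j) * ∏ i ∈ s, a i + b j * (∏ i ∈ s, a i - ∏ i ∈ s, b i) := by ring
    rw [hkey]
    have hpa : |∏ i ∈ s, a i| ≤ 1 := by
      rw [abs_prod]
      exact Finset.prod_le_one (fun i _ => abs_nonneg _)
        (fun i hi => ha i (mem_cons_of_mem hi))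
    have hbj : |b j| ≤ 1 := hb j (mem_cons_self j s)
    calc |(a j - b j) * ∏ i ∈ s, a i + b j * (∏ i ∈ s, a i - ∏ i ∈ s, b i)|
        ≤ |(a j - b j) * ∏ i ∈ s, a i| + |b j * (∏ i ∈ s, a i - ∏ i ∈ s, b i)| :=
          abs_add_le _ _
      _ ≤ |a j - b j| * 1 + 1 * |∏ i ∈ s, a i - ∏ i ∈ s, b i| := by
          rw [abs_mul, abs_mul]
          exact add_le_add (mul_le_mul_of_nonneg_left hpa (abs_nonneg _))
            (mul_le_mul_of_nonneg_right hbj (abs_nonneg _))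
      _ ≤ |a j - b j| + ∑ i ∈ s, |a i - b i| := by
          rw [mul_one, one_mul]
          gcongr
          exact ih (fun i hi => ha i (mem_cons_of_mem hi))
            (fun i hi => hb i (mem_cons_of_mem hi))

theorem product_second_order_bound (n : ℕ) (hn : 1 ≤ n) (u : ℝ) (hu : 0 < u)
    (dbar d : Fin n → ℝ)
    (hdbar : ∀ i, dbar i ∈ Set.Icc u 1) (hd : ∀ i, d i ∈ Set.Icc u 1) :
    |∏ i, dbar i - ∏ i, d i -
        ∑ l, (∏ i ∈ Finset.univ.erase l, dbar i) * (dbar l - d l)| ≤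
      (2 ^ n / u ^ (n - 1)) * ∑ i, |dbar i - d i| ^ 2 := by
  have habs1 : ∀ (f : Fin n → ℝ), (∀ i, f i ∈ Set.Icc u 1) →
      ∀ i : Fin n, |f i| ≤ 1 := by
    intro f hf i
    rw [abs_le]
    exact ⟨le_trans (by linarith) ((hf i).1), (hf i).2⟩
  -- the telescoping identity from prod_sub_ordered
  have key := Finset.prod_sub_ordered (Finset.univ : Finset (Fin n)) dbar
    (fun i => dbar i - d i)
  simp only [sub_sub_cancel] at key
  -- key : ∏ d = ∏ dbar - ∑ i, (dbar i - d i) * (∏ j < i, d j) * (∏ j > i, dbar j)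
  have herase : ∀ i : Fin n, (∏ j ∈ univ.erase i, dbar j)
      = (∏ j ∈ univ.filter (· < i), dbar j) * ∏ j ∈ univ.filter (i < ·), dbar j := by
    intro i
    rw [← Finset.prod_union]
    · apply Finset.prod_congr _ (fun _ _ => rfl)
      ext j
      simp only [mem_erase, mem_univ, and_true, mem_union, mem_filter, true_and]
      constructor
      · intro h; exact lt_or_gt_of_ne h
      · intro h; rcases h with h | h
        · exact ne_of_lt h
        · exact ne_of_gt h
    · rw [Finset.disjoint_left]
      intro j hj hj'
      simp only [mem_filter, mem_univ, true_and] at hj hj'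
      exact lt_asymm hj hj'
  have hE : ∏ i, dbar i - ∏ i, d i -
      ∑ l, (∏ i ∈ Finset.univ.erase l, dbar i) * (dbar l - d l)
      = ∑ l, ((∏ j ∈ univ.filter (· < l), d j - ∏ j ∈ univ.filter (· < l), dbar j)
          * ∏ j ∈ univ.filter (l < ·), dbar j) * (dbar l - d l) := by
    rw [key, sub_sub_cancel, ← Finset.sum_sub_distrib]
    apply Finset.sum_congr rfl
    intro l _
    rw [herase l]
    ring
  rw [hE]
  set δ : Fin n → ℝ := fun i => |dbar i - d i| with hδ
  have hδnn : ∀ i, 0 ≤ δ i := fun i => abs_nonneg _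
  have hbound : ∀ l : Fin n,
      |((∏ j ∈ univ.filter (· < l), d j - ∏ j ∈ univ.filter (· < l), dbar j)
        * ∏ j ∈ univ.filter (l < ·), dbar j) * (dbar l - d l)| ≤ (∑ j, δ j) * δ l := by
    intro l
    rw [abs_mul, abs_mul]
    have h1 : |∏ j ∈ univ.filter (· < l), d j - ∏ j ∈ univ.filter (· < l), dbar j|
        ≤ ∑ j, δ j := by
      rw [abs_sub_comm]
      refine le_trans (abs_prod_sub_prod_le_aux _ dbar d
        (fun i _ => habs1 dbar hdbar i) (fun i _ => habs1 d hd i)) ?_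
      apply Finset.sum_le_sum_of_subset_of_nonneg (Finset.subset_univ _)
      intro i _ _
      exact abs_nonneg _
    have h2 : |∏ j ∈ univ.filter (l < ·), dbar j| ≤ 1 := by
      rw [abs_prod]
      exact Finset.prod_le_one (fun i _ => abs_nonneg _)
        (fun i _ => habs1 dbar hdbar i)
    calc |∏ j ∈ univ.filter (· < l), d j - ∏ j ∈ univ.filter (· < l), dbar j|
          * |∏ j ∈ univ.filter (l < ·), dbar j| * |dbar l - d l|
        ≤ (∑ j, δ j) * 1 * δ l := by
          gcongr
      _ = (∑ j, δ j) * δ l := by ring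
  have hsum : |∑ l, ((∏ j ∈ univ.filter (· < l), d j - ∏ j ∈ univ.filter (· < l), dbar j)
        * ∏ j ∈ univ.filter (l < ·), dbar j) * (dbar l - d l)|
      ≤ (∑ j, δ j) ^ 2 := by
    refine le_trans (Finset.abs_sum_le_sum_abs _ _) ?_
    calc ∑ l, |((∏ j ∈ univ.filter (· < l), d j - ∏ j ∈ univ.filter (· < l), dbar j)
          * ∏ j ∈ univ.filter (l < ·), dbar j) * (dbar l - d l)|
        ≤ ∑ l, (∑ j, δ j) * δ l := Finset.sum_le_sum (fun l _ => hbound l)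
      _ = (∑ j, δ j) ^ 2 := by rw [← Finset.mul_sum]; ring
  refine hsum.trans ?_
  have hcheb : (∑ j, δ j) ^ 2 ≤ (n : ℝ) * ∑ j, δ j ^ 2 := by
    have := sq_sum_le_card_mul_sum_sq (s := (univ : Finset (Fin n))) (f := δ)
    simpa using this
  refine hcheb.trans ?_
  have hδ2nn : 0 ≤ ∑ j, δ j ^ 2 := Finset.sum_nonneg (fun j _ => sq_nonneg _)
  apply mul_le_mul_of_nonneg_right _ hδ2nn
  -- n ≤ 2^n / u^(n-1)
  have hu1 : u ≤ 1 := by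
    have i0 : Fin n := ⟨0, hn⟩
    exact le_trans (hdbar i0).1 (hdbar i0).2
  have hupow : (0:ℝ) < u ^ (n - 1) := pow_pos hu _
  rw [le_div_iff₀ hupow]
  calc (n : ℝ) * u ^ (n - 1) ≤ (n : ℝ) * 1 := by
        gcongr
        exact pow_le_one₀ hu.le hu1
    _ = (n : ℝ) := mul_one _
    _ ≤ 2 ^ n := by
        exact_mod_cast (Nat.lt_two_pow_self (n := n)).le
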